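/- Partition-function formula for the classical channel tumula information (first formula of the Corollary on tumula information of classical channels, under full support): Let X and Y be nonempty finite types and W a classical channel from X to Y with W x y > 0 for all x, y. Then T(W) = ⨆ over probability distributions P on X of ⨅ over probability distributions Q on X of (D(Q‖P) − Real.log Z(Q)), where Z(Q) := ∑ y, Real.exp (∑ x, Q x · Real.log (W x y)), and the inner expression is understood in [0,+∞] (it equals +∞ whenever D(Q‖P) = +∞). -/

import Mathlib

open scoped BigOperators

noncomputable section

/-- A probability distribution on a finite type. -/
structure PDist (X : Type*) [Fintype X] where
  prob : X → ℝ
  nonneg : ∀ x, 0 ≤ prob x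
  sum_one : ∑ x, prob x = 1

-- Classical relative entropy (Kullback–Leibler divergence), valued in `(-∞,∞]`.
open Classical in
noncomputable def cDKL {X : Type*} [Fintype X] (P Q : X → ℝ) : EReal :=
  if ∀ x, Q x = 0 → P x = 0 then
    ((∑ x, if P x = 0 then (0 : ℝ) else P x * Real.log (P x / Q x) : ℝ) : EReal)
  else ⊤

/-- Classical tumula information of a joint probability mass function on `X × Y`. -/
noncomputable def cT {X Y : Type*} [Fintype X] [Fintype Y] (P : X × Y → ℝ) : EReal :=
  ⨅ (Q : PDist X) (R : PDist Y), cDKL (fun p => Q.prob p.1 * R.prob p.2) P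

/-- A classical channel from `X` to `Y`. -/
structure Channel (X Y : Type*) [Fintype X] [Fintype Y] where
  prob : X → Y → ℝ
  nonneg : ∀ x y, 0 ≤ prob x y
  sum_one : ∀ x, ∑ y, prob x y = 1

/-- Classical channel tumula information. -/
noncomputable def chT {X Y : Type*} [Fintype X] [Fintype Y] (W : Channel X Y) : EReal :=
  ⨆ P : PDist X, cT (fun p => P.prob p.1 * W.prob p.1 p.2)

open Classical in
lemma inner_inf {X Y : Type*} [Fintype X] [Nonempty X] [Fintype Y] [Nonempty Y]
    (W : Channel X Y) (hW : ∀ x y, 0 < W.prob x y) (P Q : PDist X) :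
    (⨅ R : PDist Y, cDKL (fun p => Q.prob p.1 * R.prob p.2)
        (fun p : X × Y => P.prob p.1 * W.prob p.1 p.2))
      = cDKL Q.prob P.prob
        - ((Real.log (∑ y : Y, Real.exp (∑ x : X, Q.prob x * Real.log (W.prob x y))) : ℝ)
            : EReal) := by
  set f : Y → ℝ := fun y => ∑ x, Q.prob x * Real.log (W.prob x y) with hf
  set Z : ℝ := ∑ y, Real.exp (f y) with hZdef
  have hZ : 0 < Z := Finset.sum_pos (fun y _ => Real.exp_pos _) Finset.univ_nonempty
  by_cases h : ∀ x, P.prob x = 0 → Q.prob x = 0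
  · -- absolutely continuous case
    set d : ℝ := ∑ x, if Q.prob x = 0 then (0:ℝ)
      else Q.prob x * Real.log (Q.prob x / P.prob x) with hd
    have hQP : cDKL Q.prob P.prob = (d : EReal) := by
      rw [cDKL, if_pos h]
    -- Gibbs distribution
    have gpos : ∀ y, 0 < Real.exp (f y) / Z := fun y => by positivity
    set g : PDist Y := ⟨fun y => Real.exp (f y) / Z, fun y => (gpos y).le, by
      rw [← Finset.sum_div, ← hZdef, div_self hZ.ne']⟩ with hg
    have hlog_g : ∀ y, Real.log (g.prob y) = f y - Real.log Z := by
      intro y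
      show Real.log (Real.exp (f y) / Z) = _
      rw [Real.log_div (Real.exp_ne_zero _) hZ.ne', Real.log_exp]
    have hkey : ∀ R : PDist Y,
        cDKL (fun p => Q.prob p.1 * R.prob p.2)
          (fun p : X × Y => P.prob p.1 * W.prob p.1 p.2)
        = ((d + ((∑ y, if R.prob y = 0 then (0:ℝ) else R.prob y * Real.log (R.prob y))
              - ∑ y, R.prob y * f y) : ℝ) : EReal) := by
      intro R
      have hac : ∀ p : X × Y, P.prob p.1 * W.prob p.1 p.2 = 0 → Q.prob p.1 * R.prob p.2 = 0 := by
        intro p hp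
        rcases mul_eq_zero.1 hp with h1 | h2
        · exact mul_eq_zero_of_left (h p.1 h1) _
        · exact absurd h2 (hW p.1 p.2).ne'
      rw [cDKL, if_pos hac, EReal.coe_eq_coe_iff]
      rw [Fintype.sum_prod_type]
      have hterm : ∀ x y,
          (if Q.prob x * R.prob y = 0 then (0:ℝ)
            else Q.prob x * R.prob y
              * Real.log (Q.prob x * R.prob y / (P.prob x * W.prob x y)))
          = (if Q.prob x = 0 then (0:ℝ) else Q.prob x * Real.log (Q.prob x / P.prob x))
              * R.prob y
            + Q.prob x * (if R.prob y = 0 then (0:ℝ) else R.prob y * Real.log (R.prob y))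
            - Q.prob x * (R.prob y * Real.log (W.prob x y)) := by
        intro x y
        by_cases hq : Q.prob x = 0
        · simp [hq]
        by_cases hr : R.prob y = 0
        · simp [hr]
        have hp : P.prob x ≠ 0 := fun hp => hq (h x hp)
        rw [if_neg (mul_ne_zero hq hr), if_neg hq, if_neg hr,
          Real.log_div (mul_ne_zero hq hr) (mul_ne_zero hp (hW x y).ne'),
          Real.log_mul hq hr, Real.log_mul hp (hW x y).ne',
          Real.log_div hq hp]
        ring
      simp only [hterm]
      simp only [Finset.sum_sub_distrib, Finset.sum_add_distrib, ← Finset.mul_sum,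
        ← Finset.sum_mul, R.sum_one, Q.sum_one, mul_one, one_mul]
      have hcross : ∑ x, Q.prob x * ∑ y, R.prob y * Real.log (W.prob x y)
          = ∑ y, R.prob y * f y := by
        simp only [hf, Finset.mul_sum]
        rw [Finset.sum_comm]
        exact Finset.sum_congr rfl fun y _ => Finset.sum_congr rfl fun x _ => by ring
      rw [hcross, ← hd]
      ring
    have hSg : d + ((∑ y, if g.prob y = 0 then (0:ℝ) else g.prob y * Real.log (g.prob y))
        - ∑ y, g.prob y * f y) = d - Real.log Z := by
      have h1 : ∀ y, (if g.prob y = 0 then (0:ℝ) else g.prob y * Real.log (g.prob y))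
          = g.prob y * f y - g.prob y * Real.log Z := by
        intro y
        rw [if_neg (gpos y).ne', hlog_g]
        ring
      simp only [h1]
      rw [Finset.sum_sub_distrib, ← Finset.sum_mul,
        show (∑ i : Y, Real.exp (f i) / Z) = 1 from g.sum_one]
      ring
    have hlb : ∀ R : PDist Y, d - Real.log Z
        ≤ d + ((∑ y, if R.prob y = 0 then (0:ℝ) else R.prob y * Real.log (R.prob y))
          - ∑ y, R.prob y * f y) := by
      intro R
      have hterm : ∀ y, R.prob y - g.prob y
          ≤ (if R.prob y = 0 then (0:ℝ) else R.prob y * Real.log (R.prob y))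
            - R.prob y * f y + R.prob y * Real.log Z := by
        intro y
        by_cases hr : R.prob y = 0
        · simp [hr]
          exact (gpos y).le
        have hrpos : 0 < R.prob y := (R.nonneg y).lt_of_ne (Ne.symm hr)
        rw [if_neg hr]
        have key : Real.log (g.prob y / R.prob y) ≤ g.prob y / R.prob y - 1 :=
          Real.log_le_sub_one_of_pos (by positivity)
        have hlggr : Real.log (g.prob y / R.prob y)
            = (f y - Real.log Z) - Real.log (R.prob y) := by
          rw [Real.log_div (gpos y).ne' hr, hlog_g]
        have h2 := mul_le_mul_of_nonneg_left key hrpos.le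
        rw [hlggr] at h2
        have h3 : R.prob y * (g.prob y / R.prob y) = g.prob y := by
          field_simp
        nlinarith [h2, h3]
      have hsum := Finset.sum_le_sum (fun y (_ : y ∈ Finset.univ) => hterm y)
      rw [Finset.sum_sub_distrib, R.sum_one, g.sum_one] at hsum
      have hsum2 : ∑ y, ((if R.prob y = 0 then (0:ℝ) else R.prob y * Real.log (R.prob y))
            - R.prob y * f y + R.prob y * Real.log Z)
          = (∑ y, if R.prob y = 0 then (0:ℝ) else R.prob y * Real.log (R.prob y))
            - ∑ y, R.prob y * f y + Real.log Z := by
        rw [Finset.sum_add_distrib, Finset.sum_sub_distrib, ← Finset.sum_mul, R.sum_one,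
          one_mul]
      rw [hsum2] at hsum
      linarith
    rw [hQP, show (d : EReal) - ((Real.log Z : ℝ) : EReal)
      = ((d - Real.log Z : ℝ) : EReal) from (EReal.coe_sub _ _).symm]
    apply le_antisymm
    · refine iInf_le_of_le g ?_
      rw [hkey g]
      exact_mod_cast le_of_eq hSg
    · refine le_iInf fun R => ?_
      rw [hkey R]
      exact_mod_cast hlb R
  · -- singular case
    have h' := h
    push_neg at h'
    obtain ⟨x₀, hP0, hQ0⟩ := h'
    have hR : ∀ R : PDist Y, cDKL (fun p => Q.prob p.1 * R.prob p.2)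
        (fun p : X × Y => P.prob p.1 * W.prob p.1 p.2) = ⊤ := by
      intro R
      obtain ⟨y₀, hy₀⟩ : ∃ y, R.prob y ≠ 0 := by
        by_contra hc
        push_neg at hc
        have h1 := R.sum_one
        simp [hc] at h1
      rw [cDKL, if_neg]
      push_neg
      exact ⟨(x₀, y₀), by simp [hP0], mul_ne_zero hQ0 hy₀⟩
    simp only [hR]
    rw [iInf_top, cDKL, if_neg h, EReal.top_sub_coe]

/-- Partition-function formula for the classical channel tumula information
(first formula of the Corollary, under full support). -/
theorem channel_tumula_partition_function {X Y : Type*}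
    [Fintype X] [Nonempty X] [Fintype Y] [Nonempty Y]
    (W : Channel X Y) (hW : ∀ x y, 0 < W.prob x y) :
    chT W = ⨆ P : PDist X, ⨅ Q : PDist X,
      (cDKL Q.prob P.prob
        - ((Real.log (∑ y : Y, Real.exp (∑ x : X, Q.prob x * Real.log (W.prob x y))) : ℝ)
            : EReal)) := by
  unfold chT cT
  exact iSup_congr fun P => iInf_congr fun Q => inner_inf W hW P Q

end
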